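/- arXiv:1111.4673 — 2 statements merged into one kernel-verified Lean document; each statement's English description precedes it below -/
import Mathlib

section
/- Let k be a field, let R and R^∨ be k-vector spaces with a nondegenerate bilinear pairing ⟨·,·⟩ : R^∨ × R → k, and let V, W be k-vector spaces. Then the map D : Hom(V, R ⊗ W) → Hom_rat(R^∨ ⊗ V, W), sending a linear map f : V → R ⊗ W to the linear map D(f) = (⟨·,·⟩ ⊗ id_W) ∘ (id_{R^∨} ⊗ f) : R^∨ ⊗ V → W, is well defined and bijective. -/
open TensorProduct

section

variable (k : Type*) [Field k] (R Rv V W : Type*)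
  [AddCommGroup R] [Module k R] [AddCommGroup Rv] [Module k Rv]
  [AddCommGroup V] [Module k V] [AddCommGroup W] [Module k W]

/-- The contraction map `R^∨ →ₗ ((R ⊗ W) →ₗ W)`, `ξ ↦ (x ⊗ w ↦ ⟨ξ, x⟩ • w)`,
associated to a bilinear pairing `⟨·,·⟩ = B : R^∨ → R → k`. -/
noncomputable def pairingContract (B : Rv →ₗ[k] R →ₗ[k] k) :
    Rv →ₗ[k] (R ⊗[k] W) →ₗ[k] W :=
  (TensorProduct.lift.equiv (RingHom.id k) R W W).toLinearMap ∘ₗ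
    (LinearMap.llcomp k R k (W →ₗ[k] W) (LinearMap.lsmul k W)) ∘ₗ B

/-- The map `D : Hom(V, R ⊗ W) → Hom(R^∨ ⊗ V, W)`,
`f ↦ (⟨·,·⟩ ⊗ id_W) ∘ (id_{R^∨} ⊗ f)`; on pure tensors,
`D f (ξ ⊗ v) = (⟨ξ,·⟩ ⊗ id_W) (f v)`. -/
noncomputable def Dmap (B : Rv →ₗ[k] R →ₗ[k] k) (f : V →ₗ[k] R ⊗[k] W) :
    Rv ⊗[k] V →ₗ[k] W :=
  TensorProduct.lift
    (((LinearMap.llcomp k V (R ⊗[k] W) W).flip f) ∘ₗ pairingContract k R Rv W B)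

/-- `g : R^∨ ⊗ V → W` is rational if every `v ∈ V` admits a finite-dimensional
subspace `E ⊆ R` with `g(ξ ⊗ v) = 0` for all `ξ ∈ ⊥E`. -/
def IsRatLeft (B : Rv →ₗ[k] R →ₗ[k] k) (g : Rv ⊗[k] V →ₗ[k] W) : Prop :=
  ∀ v : V, ∃ E : Submodule k R, FiniteDimensional k E ∧
    ∀ ξ : Rv, (∀ x ∈ E, B ξ x = 0) → g (ξ ⊗ₜ[k] v) = 0

lemma pairingContract_tmul (B : Rv →ₗ[k] R →ₗ[k] k) (ξ : Rv) (x : R) (w : W) :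
    pairingContract k R Rv W B ξ (x ⊗ₜ[k] w) = B ξ x • w := by
  simp [pairingContract]

lemma Dmap_tmul (B : Rv →ₗ[k] R →ₗ[k] k) (f : V →ₗ[k] R ⊗[k] W) (ξ : Rv) (v : V) :
    Dmap k R Rv V W B f (ξ ⊗ₜ[k] v) = pairingContract k R Rv W B ξ (f v) := by
  simp [Dmap]

lemma pairingContract_zero_of (B : Rv →ₗ[k] R →ₗ[k] k)
    (hnd₂ : ∀ x : R, (∀ ξ : Rv, B ξ x = 0) → x = 0) (t : R ⊗[k] W)
    (ht : ∀ ξ : Rv, pairingContract k R Rv W B ξ t = 0) : t = 0 := by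
  classical
  set b := Module.Basis.ofVectorSpace k W with hb
  set E : R ⊗[k] W ≃ₗ[k] (Module.Basis.ofVectorSpaceIndex k W →₀ R) :=
    (LinearEquiv.lTensor R b.repr).trans
      (TensorProduct.finsuppScalarRight k k R (Module.Basis.ofVectorSpaceIndex k W)) with hE
  have key : ∀ (t : R ⊗[k] W) (ξ : Rv) (j : Module.Basis.ofVectorSpaceIndex k W),
      B ξ (E t j) = b.repr (pairingContract k R Rv W B ξ t) j := by
    intro t
    induction t using TensorProduct.induction_on with
    | zero => simp
    | tmul x w =>
      intro ξ j
      simp [hE, LinearEquiv.lTensor, TensorProduct.finsuppScalarRight_apply_tmul_apply,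
        pairingContract_tmul, mul_comm]
    | add t1 t2 ih1 ih2 =>
      intro ξ j
      simp [map_add, ih1, ih2]
  have hEt : E t = 0 := by
    ext j
    refine hnd₂ _ fun ξ => ?_
    rw [key t ξ j, ht ξ]
    simp
  simpa using congrArg E.symm hEt

lemma exists_rep (B : Rv →ₗ[k] R →ₗ[k] k)
    (E : Submodule k R) (hfd : FiniteDimensional k E) (h : Rv →ₗ[k] W)
    (hh : ∀ ξ : Rv, (∀ x ∈ E, B ξ x = 0) → h ξ = 0) :
    ∃ t : R ⊗[k] W, ∀ ξ : Rv, pairingContract k R Rv W B ξ t = h ξ := by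
  classical
  let π : Rv →ₗ[k] Module.Dual k E := (B.flip ∘ₗ E.subtype).flip
  have hπ : ∀ (ξ : Rv) (e : E), π ξ e = B ξ (e : R) := fun ξ e => rfl
  have hker : LinearMap.ker π ≤ LinearMap.ker h := by
    intro ξ hξ
    refine hh ξ fun x hx => ?_
    have : π ξ ⟨x, hx⟩ = 0 := by
      rw [LinearMap.mem_ker.mp hξ]; rfl
    simpa [hπ] using this
  let hbar := (LinearMap.ker π).liftQ h hker
  let q := π.quotKerEquivRange
  obtain ⟨h', hh'⟩ := LinearMap.exists_extend (hbar ∘ₗ (q.symm : LinearMap.range π →ₗ[k] _))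
  have hfac : ∀ ξ : Rv, h' (π ξ) = h ξ := by
    intro ξ
    have h1 : π ξ = (LinearMap.range π).subtype ⟨π ξ, LinearMap.mem_range_self π ξ⟩ := rfl
    rw [h1, ← LinearMap.comp_apply, hh']
    have h2 : q.symm ⟨π ξ, LinearMap.mem_range_self π ξ⟩ =
        Submodule.Quotient.mk ξ := by
      rw [LinearEquiv.symm_apply_eq]
      exact Subtype.ext (LinearMap.quotKerEquivRange_apply_mk π ξ).symm
    simp only [LinearMap.comp_apply, LinearEquiv.coe_coe, h2]
    exact Submodule.liftQ_apply _ _ _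
  have : FiniteDimensional k E := hfd
  let bE := Module.finBasis k E
  refine ⟨∑ i, ((bE i : R) ⊗ₜ[k] h' (bE.coord i)), fun ξ => ?_⟩
  rw [map_sum]
  have : ∀ i, pairingContract k R Rv W B ξ ((bE i : R) ⊗ₜ[k] h' (bE.coord i))
      = h' ((π ξ) (bE i) • bE.coord i) := by
    intro i
    rw [pairingContract_tmul, hπ, map_smul]
  rw [Finset.sum_congr rfl fun i _ => this i, ← map_sum,
    bE.sum_dual_apply_smul_coord (π ξ), hfac]

/-- **Lemma (rationality, left version).** If the pairing `⟨·,·⟩ : R^∨ ⊗ R → k` is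
nondegenerate, then `D : Hom(V, R ⊗ W) → Hom_rat(R^∨ ⊗ V, W)` is well defined
(it takes values in the rational homomorphisms) and bijective. -/
theorem dual_pair_rational_hom_left
    (B : Rv →ₗ[k] R →ₗ[k] k)
    (hnd₁ : ∀ ξ : Rv, (∀ x : R, B ξ x = 0) → ξ = 0)
    (hnd₂ : ∀ x : R, (∀ ξ : Rv, B ξ x = 0) → x = 0) :
    (∀ f : V →ₗ[k] R ⊗[k] W, IsRatLeft k R Rv V W B (Dmap k R Rv V W B f)) ∧
    Function.Injective (Dmap k R Rv V W B) ∧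
    (∀ g : Rv ⊗[k] V →ₗ[k] W, IsRatLeft k R Rv V W B g →
      ∃ f : V →ₗ[k] R ⊗[k] W, Dmap k R Rv V W B f = g) := by
  classical
  set Φ : R ⊗[k] W →ₗ[k] Rv →ₗ[k] W := (pairingContract k R Rv W B).flip with hΦdef
  have hΦinj : Function.Injective Φ := by
    intro t1 t2 h12
    have hsub : ∀ ξ : Rv, pairingContract k R Rv W B ξ (t1 - t2) = 0 := by
      intro ξ
      have : Φ t1 ξ = Φ t2 ξ := by rw [h12]
      simp only [hΦdef, LinearMap.flip_apply] at this
      rw [map_sub, this, sub_self]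
    have := pairingContract_zero_of k R Rv W B hnd₂ (t1 - t2) hsub
    exact sub_eq_zero.mp this
  refine ⟨?_, ?_, ?_⟩
  · -- rationality
    intro f v
    obtain ⟨s, hs⟩ := TensorProduct.exists_finset (f v)
    refine ⟨Submodule.span k ((s.image Prod.fst : Finset R) : Set R),
      FiniteDimensional.span_of_finite k (Finset.finite_toSet _), fun ξ hξ => ?_⟩
    rw [Dmap_tmul, hs, map_sum]
    refine Finset.sum_eq_zero fun p hp => ?_
    rw [pairingContract_tmul, hξ p.1 (Submodule.subset_span
      (Finset.mem_coe.mpr (Finset.mem_image_of_mem Prod.fst hp))), zero_smul]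
  · -- injectivity
    intro f1 f2 h12
    apply LinearMap.ext; intro v
    apply hΦinj
    apply LinearMap.ext; intro ξ
    have := congrArg (fun h => h (ξ ⊗ₜ[k] v)) h12
    simpa only [hΦdef, LinearMap.flip_apply, ← Dmap_tmul] using this
  · -- surjectivity
    intro g hg
    set G : V →ₗ[k] Rv →ₗ[k] W := (TensorProduct.curry g).flip with hGdef
    have hmem : ∀ v : V, G v ∈ LinearMap.range Φ := by
      intro v
      obtain ⟨E, hfd, hvan⟩ := hg v
      obtain ⟨t, ht⟩ := exists_rep k R Rv W B E hfd (G v)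
        (fun ξ hξ => by simpa [hGdef] using hvan ξ hξ)
      exact ⟨t, LinearMap.ext fun ξ => ht ξ⟩
    set e := LinearEquiv.ofInjective Φ hΦinj with hedef
    refine ⟨e.symm.toLinearMap ∘ₗ (G.codRestrict (LinearMap.range Φ) hmem), ?_⟩
    apply TensorProduct.ext'
    intro ξ v
    have h1 : e (e.symm ⟨G v, hmem v⟩) = ⟨G v, hmem v⟩ := e.apply_symm_apply _
    have h2 : Φ (e.symm ⟨G v, hmem v⟩) = G v := by
      rw [← LinearEquiv.ofInjective_apply Φ (h := hΦinj), ← hedef, h1]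
    rw [Dmap_tmul]
    have h3 := congrArg (fun h : Rv →ₗ[k] W => h ξ) h2
    simp only [hΦdef, LinearMap.flip_apply, hGdef, TensorProduct.curry_apply,
      LinearMap.comp_apply, LinearEquiv.coe_coe] at h3 ⊢
    exact h3


end
end

section
/- Let k be a field and B a coalgebra over k equipped with an ℕ-filtration, i.e. an increasing family of subspaces F_0B ⊆ F_1B ⊆ ⋯ with B = ∪_{n≥0} F_nB and Δ(x) ∈ Σ_{i=0}^n F_iB ⊗ F_{n-i}B for every x ∈ F_nB and every n. Let U be a nonzero left B-comodule with coaction δ : U → B ⊗ U. Then there exists a nonzero element u ∈ U with δ(u) ∈ F_0B ⊗ U. -/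
open TensorProduct

private lemma finsetSum_submodule_le {k X : Type*} [Field k] [AddCommGroup X] [Module k X]
    (s : Finset ℕ) (R : ℕ → Submodule k X) (p : Submodule k X)
    (h : ∀ j ∈ s, R j ≤ p) : (∑ j ∈ s, R j) ≤ p := by
  classical
  induction s using Finset.cons_induction with
  | empty => simp
  | cons a s ha ih =>
    rw [Finset.sum_cons, Submodule.add_eq_sup]
    exact sup_le (h a (Finset.mem_cons_self a s))
      (ih fun j hj => h j (Finset.mem_cons_of_mem hj))

/-- **Lemma.** Let `B` be a coalgebra with an ℕ-filtration
`F₀B ⊆ F₁B ⊆ ⋯`, `B = ⋃ₙ FₙB`, `Δ(FₙB) ⊆ Σᵢ FᵢB ⊗ F_{n-i}B`, and let `U` be a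
nonzero left `B`-comodule.  Then there is a nonzero `u ∈ U` with
`δ(u) ∈ F₀B ⊗ U`. -/
theorem exists_coinvariant_of_filtration
    (k B U : Type*) [Field k]
    [AddCommGroup B] [Module k B] [Coalgebra k B]
    [AddCommGroup U] [Module k U] [Nontrivial U]
    (F : ℕ → Submodule k B)
    (hmono : Monotone F)
    (hcover : ∀ x : B, ∃ n, x ∈ F n)
    (hcomul : ∀ (n : ℕ), ∀ x ∈ F n,
      Coalgebra.comul (R := k) x ∈
        ∑ i ∈ Finset.range (n + 1),
          LinearMap.range (TensorProduct.map (F i).subtype (F (n - i)).subtype))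
    (δ : U →ₗ[k] B ⊗[k] U)
    (hδcoassoc : ∀ u : U,
      (TensorProduct.assoc k B B U)
          ((TensorProduct.map (Coalgebra.comul (R := k)) LinearMap.id) (δ u)) =
        (TensorProduct.map LinearMap.id δ) (δ u))
    (hδcounit : ∀ u : U,
      (TensorProduct.lid k U)
          ((TensorProduct.map (Coalgebra.counit (R := k)) LinearMap.id) (δ u)) = u) :
    ∃ u : U, u ≠ 0 ∧
      δ u ∈ LinearMap.range
        (TensorProduct.map (F 0).subtype (LinearMap.id : U →ₗ[k] U)) := by
  classical
  set w : Module.Basis (Module.Basis.ofVectorSpaceIndex k U) k U := Module.Basis.ofVectorSpace k U with hw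
  set ι := Module.Basis.ofVectorSpaceIndex k U
  set e : B ⊗[k] U ≃ₗ[k] (ι →₀ B) :=
    (TensorProduct.congr (LinearEquiv.refl k B) w.repr) ≪≫ₗ
      TensorProduct.finsuppScalarRight k k B ι with he
  have e_tmul : ∀ (b : B) (x : U) (i : ι), e (b ⊗ₜ[k] x) i = w.repr x i • b := by
    intro b x i
    simp [he]
  have e_symm_single : ∀ (i : ι) (b : B), e.symm (Finsupp.single i b) = b ⊗ₜ[k] w i := by
    intro i b
    rw [LinearEquiv.symm_apply_eq]
    ext j
    rw [e_tmul, Module.Basis.repr_self]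
    simp only [Finsupp.single_apply]
    split_ifs <;> simp
  set S : ℕ → Submodule k (B ⊗[k] U) := fun n =>
    LinearMap.range (TensorProduct.map (F n).subtype (LinearMap.id : U →ₗ[k] U)) with hS
  have memA : ∀ (n : ℕ) (t : B ⊗[k] U), t ∈ S n → ∀ i, e t i ∈ F n := by
    rintro n t ⟨s, rfl⟩ i
    induction s using TensorProduct.induction_on with
    | zero => simp
    | tmul b x =>
      rw [TensorProduct.map_tmul, LinearMap.id_apply, e_tmul]
      exact Submodule.smul_mem _ _ b.2
    | add s₁ s₂ h₁ h₂ =>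
      rw [map_add, map_add, Finsupp.add_apply]
      exact Submodule.add_mem _ h₁ h₂
  have recon : ∀ t : B ⊗[k] U, t = ∑ i ∈ (e t).support, (e t i) ⊗ₜ[k] w i := by
    intro t
    conv_lhs => rw [← e.symm_apply_apply t, ← Finsupp.sum_single (e t)]
    rw [Finsupp.sum, map_sum]
    exact Finset.sum_congr rfl fun i _ => e_symm_single i _
  have memC : ∀ (n : ℕ) (s : Finset ι) (c : ι → B), (∀ i ∈ s, c i ∈ F n) →
      (∑ i ∈ s, c i ⊗ₜ[k] w i) ∈ S n := by
    intro n s c hc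
    refine Submodule.sum_mem _ fun i hi => ⟨(⟨c i, hc i hi⟩ : F n) ⊗ₜ[k] w i, ?_⟩
    simp
  have main : ∀ (n : ℕ) (u : U), u ≠ 0 → δ u ∈ S n →
      ∃ v : U, v ≠ 0 ∧ δ v ∈ S 0 := by
    intro n
    induction n with
    | zero => exact fun u hu h => ⟨u, hu, h⟩
    | succ n ih =>
      intro u hu hmem
      by_cases hall : ∀ i, e (δ u) i ∈ F n
      · refine ih u hu ?_
        rw [recon (δ u)]
        exact memC n _ _ fun i _ => hall i
      · push_neg at hall
        obtain ⟨i₀, hi₀⟩ := hall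
        obtain ⟨f, hf0, hfbot⟩ := (F n).exists_dual_map_eq_bot_of_notMem hi₀ inferInstance
        set φ : B →ₗ[k] k := (f (e (δ u) i₀))⁻¹ • f with hφ
        have hφ1 : φ (e (δ u) i₀) = 1 := by
          simp [hφ, inv_mul_cancel₀ hf0]
        have hφF : ∀ a ∈ F n, φ a = 0 := by
          intro a ha
          have hfa : f a ∈ (F n).map f := ⟨a, ha, rfl⟩
          rw [hfbot, Submodule.mem_bot] at hfa
          simp [hφ, hfa]
        set Lφ : B ⊗[k] U →ₗ[k] U :=
          (TensorProduct.lid k U).toLinearMap ∘ₗ TensorProduct.map φ LinearMap.id with hLφ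
        set Lφ' : B ⊗[k] (B ⊗[k] U) →ₗ[k] B ⊗[k] U :=
          (TensorProduct.lid k (B ⊗[k] U)).toLinearMap ∘ₗ TensorProduct.map φ LinearMap.id
          with hLφ'
        set v : U := Lφ (δ u) with hv
        have hvformula : v = ∑ i ∈ (e (δ u)).support, φ (e (δ u) i) • w i := by
          rw [hv]
          conv_lhs => rw [recon (δ u)]
          rw [map_sum]
          exact Finset.sum_congr rfl fun i _ => by simp [hLφ]
        have hsupp : i₀ ∈ (e (δ u)).support := by
          rw [Finsupp.mem_support_iff]
          intro h0
          exact hi₀ (h0 ▸ (F n).zero_mem)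
        have hvrep : w.repr v i₀ = 1 := by
          rw [hvformula, map_sum, Finsupp.finset_sum_apply,
            Finset.sum_eq_single_of_mem i₀ hsupp]
          · rw [map_smul, Module.Basis.repr_self]
            simp [hφ1]
          · intro i _ hne
            rw [map_smul, Module.Basis.repr_self]
            simp [Finsupp.single_apply, hne]
        have hvne : v ≠ 0 := by
          intro h0
          rw [h0, map_zero] at hvrep
          simp at hvrep
        refine ⟨v, hvne, ?_⟩
        have hcomm : δ ∘ₗ Lφ = Lφ' ∘ₗ TensorProduct.map LinearMap.id δ := by
          apply TensorProduct.ext'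
          intro b x
          simp [hLφ, hLφ']
        have hδv : δ v = Lφ' ((TensorProduct.assoc k B B U)
            ((TensorProduct.map (Coalgebra.comul (R := k)) LinearMap.id) (δ u))) := by
          rw [hδcoassoc u]
          calc δ v = (δ ∘ₗ Lφ) (δ u) := rfl
            _ = (Lφ' ∘ₗ TensorProduct.map LinearMap.id δ) (δ u) := by rw [hcomm]
            _ = Lφ' ((TensorProduct.map LinearMap.id δ) (δ u)) := rfl
        have hexp : (TensorProduct.map (Coalgebra.comul (R := k)) LinearMap.id) (δ u) =
            ∑ i ∈ (e (δ u)).support,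
              (Coalgebra.comul (R := k) (e (δ u) i)) ⊗ₜ[k] w i := by
          conv_lhs => rw [recon (δ u)]
          rw [map_sum]
          exact Finset.sum_congr rfl fun i _ => by simp
        rw [hδv, hexp, map_sum, map_sum]
        apply Submodule.sum_mem
        intro i _
        have hdi : e (δ u) i ∈ F (n + 1) := memA (n + 1) (δ u) hmem i
        have hc := hcomul (n + 1) _ hdi
        set h_i : B ⊗[k] B →ₗ[k] B ⊗[k] U :=
          Lφ' ∘ₗ (TensorProduct.assoc k B B U).toLinearMap ∘ₗ
            ((TensorProduct.mk k (B ⊗[k] B) U).flip (w i)) with hh_i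
        have hgoal_eq : Lφ' ((TensorProduct.assoc k B B U)
            ((Coalgebra.comul (R := k) (e (δ u) i)) ⊗ₜ[k] w i)) =
            h_i (Coalgebra.comul (R := k) (e (δ u) i)) := rfl
        rw [hgoal_eq]
        have hle : (∑ j ∈ Finset.range (n + 1 + 1),
            LinearMap.range (TensorProduct.map (F j).subtype (F (n + 1 - j)).subtype)) ≤
            (S 0).comap h_i := by
          apply finsetSum_submodule_le
          intro j hj
          rintro z ⟨s', rfl⟩
          rw [Submodule.mem_comap]
          induction s' using TensorProduct.induction_on with
          | zero => simp
          | tmul a b =>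
            rw [TensorProduct.map_tmul]
            simp only [Submodule.subtype_apply]
            have hterm : h_i ((a : B) ⊗ₜ[k] (b : B)) = φ (a : B) • ((b : B) ⊗ₜ[k] w i) := by
              simp [hh_i, hLφ']
            rw [hterm]
            rcases le_or_gt j n with hjn | hjn
            · rw [hφF (a : B) (hmono hjn a.2), zero_smul]
              exact Submodule.zero_mem _
            · have hb0 : (b : B) ∈ F 0 :=
                hmono (show n + 1 - j ≤ 0 by
                  have := Finset.mem_range.mp hj; omega) b.2
              refine Submodule.smul_mem _ _ ⟨(⟨(b : B), hb0⟩ : F 0) ⊗ₜ[k] w i, ?_⟩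
              simp
          | add s₁ s₂ h₁ h₂ =>
            rw [map_add, map_add]
            exact Submodule.add_mem _ h₁ h₂
        exact hle hc
  -- start: find some n with δ u₀ ∈ S n
  have Smono : Monotone S := by
    intro a b hab
    rintro t ⟨s, rfl⟩
    refine ⟨TensorProduct.map (Submodule.inclusion (hmono hab)) LinearMap.id s, ?_⟩
    rw [← LinearMap.comp_apply, ← TensorProduct.map_comp,
      Submodule.subtype_comp_inclusion, LinearMap.id_comp]
  have cover' : ∀ t : B ⊗[k] U, ∃ n, t ∈ S n := by
    intro t
    have htop : t ∈ ⨆ n, S n := by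
      induction t using TensorProduct.induction_on with
      | zero => exact zero_mem _
      | tmul b x =>
        obtain ⟨n, hn⟩ := hcover b
        exact Submodule.mem_iSup_of_mem n ⟨(⟨b, hn⟩ : F n) ⊗ₜ[k] x, by simp⟩
      | add a b ha hb => exact add_mem ha hb
    exact (Submodule.mem_iSup_of_directed S (Smono.directed_le)).mp htop
  obtain ⟨u₀, hu₀⟩ := exists_ne (0 : U)
  obtain ⟨n, hn⟩ := cover' (δ u₀)
  exact main n u₀ hu₀ hn
end
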